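/- arXiv:1707.00965 — 3 statements merged into one kernel-verified Lean document; each statement's English description precedes it below -/
import Mathlib

section
/- For real numbers a > 0, d ≥ 0, c ≠ 0, the integral over ℝ of a(a+d)/((x² + a²)((x + c)² + (a+d)²)) dx equals π(2a + d)/(c² + (2a + d)²). -/
open MeasureTheory Real Filter

private lemma aux_ratio (p q : ℝ) {l : Filter ℝ}
    (hinv : Tendsto (fun x : ℝ => x⁻¹) l (nhds 0)) (hne : ∀ᶠ x in l, x ≠ 0) :
    Tendsto (fun x : ℝ => ((x + q) ^ 2 + p) / x ^ 2) l (nhds 1) := by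
  have h : Tendsto (fun x : ℝ => (1 + q * x⁻¹) ^ 2 + p * x⁻¹ ^ 2) l
      (nhds ((1 + q * 0) ^ 2 + p * 0 ^ 2)) :=
    ((tendsto_const_nhds.add (hinv.const_mul q)).pow 2).add ((hinv.pow 2).const_mul p)
  have h' : Tendsto (fun x : ℝ => (1 + q * x⁻¹) ^ 2 + p * x⁻¹ ^ 2) l (nhds 1) := by
    simpa using h
  refine Tendsto.congr' ?_ h'
  filter_upwards [hne] with x hx
  field_simp

set_option maxHeartbeats 1000000 in
private lemma key_lorentzian (a b c : ℝ) (ha : 0 < a) (hb : 0 < b) (hc : c ≠ 0) :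
    ∫ x : ℝ, a * b / ((x ^ 2 + a ^ 2) * ((x + c) ^ 2 + b ^ 2)) =
      π * (a + b) / (c ^ 2 + (a + b) ^ 2) := by
  have hM : (0:ℝ) < (c ^ 2 + (a + b) ^ 2) * (c ^ 2 + (a - b) ^ 2) := by positivity
  set M : ℝ := (c ^ 2 + (a + b) ^ 2) * (c ^ 2 + (a - b) ^ 2) with hMdef
  set A : ℝ := -(2 * a * b * c) / M with hA
  set B : ℝ := a * b * (c ^ 2 + b ^ 2 - a ^ 2) / M with hB
  set E : ℝ := a * b * (c ^ 2 + a ^ 2 - b ^ 2) / M with hE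
  set F : ℝ → ℝ := fun x => A / 2 * Real.log (x ^ 2 + a ^ 2)
      - A / 2 * Real.log ((x + c) ^ 2 + b ^ 2)
      + B / a * Real.arctan (x / a) + E / b * Real.arctan ((x + c) / b) with hF
  set f : ℝ → ℝ := fun x => a * b / ((x ^ 2 + a ^ 2) * ((x + c) ^ 2 + b ^ 2)) with hf
  have hpos1 : ∀ x : ℝ, (0:ℝ) < x ^ 2 + a ^ 2 := fun x => by positivity
  have hpos2 : ∀ x : ℝ, (0:ℝ) < (x + c) ^ 2 + b ^ 2 := fun x => by positivity
  -- derivative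
  have hderiv : ∀ x : ℝ, HasDerivAt F (f x) x := by
    intro x
    have h1 : HasDerivAt (fun x : ℝ => x ^ 2 + a ^ 2) (2 * x) x := by
      simpa using (hasDerivAt_pow 2 x).add_const (a ^ 2)
    have h2 : HasDerivAt (fun x : ℝ => (x + c) ^ 2 + b ^ 2) (2 * (x + c)) x := by
      simpa using (((hasDerivAt_id x).add_const c).pow 2).add_const (b ^ 2)
    have hl1 : HasDerivAt (fun x : ℝ => Real.log (x ^ 2 + a ^ 2))
        (2 * x / (x ^ 2 + a ^ 2)) x := h1.log (hpos1 x).ne'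
    have hl2 : HasDerivAt (fun x : ℝ => Real.log ((x + c) ^ 2 + b ^ 2))
        (2 * (x + c) / ((x + c) ^ 2 + b ^ 2)) x := h2.log (hpos2 x).ne'
    have ha1 : HasDerivAt (fun x : ℝ => Real.arctan (x / a))
        (1 / (1 + (x / a) ^ 2) * (1 / a)) x := by
      have := (Real.hasDerivAt_arctan (x / a)).comp x ((hasDerivAt_id x).div_const a)
      exact this
    have ha2 : HasDerivAt (fun x : ℝ => Real.arctan ((x + c) / b))
        (1 / (1 + ((x + c) / b) ^ 2) * (1 / b)) x := by
      have := (Real.hasDerivAt_arctan ((x + c) / b)).comp x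
        (((hasDerivAt_id x).add_const c).div_const b)
      exact this
    have hcomb := (((hl1.const_mul (A / 2)).sub (hl2.const_mul (A / 2))).add
      (ha1.const_mul (B / a))).add (ha2.const_mul (E / b))
    refine hcomb.congr_deriv ?_
    rw [hf, hA, hB, hE]
    have h1a : (1 + (x / a) ^ 2) = (x ^ 2 + a ^ 2) / a ^ 2 := by
      field_simp; ring
    have h2b : (1 + ((x + c) / b) ^ 2) = ((x + c) ^ 2 + b ^ 2) / b ^ 2 := by
      field_simp; ring
    rw [h1a, h2b]
    field_simp
    ring
  -- integrability
  have hcont : Continuous f := by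
    apply continuous_const.div
    · continuity
    · intro x
      exact (mul_pos (hpos1 x) (hpos2 x)).ne'
  have hint : Integrable f := by
    have hgint : Integrable (fun x : ℝ => (1 + a ^ 2) / (a * b * (1 + x ^ 2))) := by
      refine (integrable_inv_one_add_sq.const_mul ((1 + a ^ 2) / (a * b))).congr
        (Filter.Eventually.of_forall fun x => ?_)
      have hx : (0:ℝ) < 1 + x ^ 2 := by positivity
      field_simp
    refine Integrable.mono' hgint hcont.aestronglyMeasurable
      (Filter.Eventually.of_forall fun x => ?_)
    rw [Real.norm_eq_abs, abs_of_nonneg (by positivity)]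
    show a * b / ((x ^ 2 + a ^ 2) * ((x + c) ^ 2 + b ^ 2)) ≤ (1 + a ^ 2) / (a * b * (1 + x ^ 2))
    rw [div_le_div_iff₀ (by positivity) (by positivity)]
    nlinarith [mul_nonneg (mul_nonneg (by positivity : (0:ℝ) ≤ 1 + a ^ 2) (hpos1 x).le)
        (sq_nonneg (x + c)),
      mul_nonneg (sq_nonneg b) (by positivity : (0:ℝ) ≤ x ^ 2 + a ^ 4)]
  -- limits of the logarithmic part
  have hinv_bot : Tendsto (fun x : ℝ => x⁻¹) atBot (nhds 0) := by
    have h := (tendsto_abs_atBot_atTop (G := ℝ)).inv_tendsto_atTop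
    refine (tendsto_zero_iff_abs_tendsto_zero _).mpr (h.congr fun x => ?_)
    simp [abs_inv]
  have hratio : ∀ l : Filter ℝ, Tendsto (fun x : ℝ => x⁻¹) l (nhds 0) →
      (∀ᶠ x in l, x ≠ 0) →
      Tendsto (fun x : ℝ => Real.log (x ^ 2 + a ^ 2) - Real.log ((x + c) ^ 2 + b ^ 2))
        l (nhds 0) := by
    intro l hinv hne
    have hn : Tendsto (fun x : ℝ => (x ^ 2 + a ^ 2) / x ^ 2) l (nhds 1) :=
      (aux_ratio (a ^ 2) 0 hinv hne).congr (fun x => by norm_num)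
    have hd := aux_ratio (b ^ 2) c hinv hne
    have hr : Tendsto (fun x : ℝ => (x ^ 2 + a ^ 2) / ((x + c) ^ 2 + b ^ 2)) l (nhds 1) := by
      have hq : Tendsto (fun x : ℝ => ((x ^ 2 + a ^ 2) / x ^ 2) /
          (((x + c) ^ 2 + b ^ 2) / x ^ 2)) l (nhds 1) := by
        have := hn.div hd one_ne_zero; rw [div_one] at this; exact this
      refine Tendsto.congr' ?_ hq
      filter_upwards [hne] with x hx
      rw [div_div_div_cancel_right₀ (pow_ne_zero 2 hx)]
    have hlog : Tendsto Real.log (nhds 1) (nhds 0) := by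
      have := (Real.continuousAt_log one_ne_zero).tendsto
      simpa using this
    refine (hlog.comp hr).congr (fun x => ?_)
    simp only [Function.comp]
    rw [Real.log_div (hpos1 x).ne' (hpos2 x).ne']
  have htop : Tendsto F atTop (nhds (B / a * (π / 2) + E / b * (π / 2))) := by
    have hlogpart : Tendsto (fun x : ℝ => A / 2 * Real.log (x ^ 2 + a ^ 2)
        - A / 2 * Real.log ((x + c) ^ 2 + b ^ 2)) atTop (nhds 0) := by
      have := (hratio atTop tendsto_inv_atTop_zero (eventually_ne_atTop 0)).const_mul (A / 2)
      simpa [mul_sub] using this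
    have ht1 : Tendsto (fun x : ℝ => Real.arctan (x / a)) atTop (nhds (π / 2)) :=
      (Real.tendsto_arctan_atTop.mono_right nhdsWithin_le_nhds).comp
        (tendsto_id.atTop_div_const ha)
    have ht2 : Tendsto (fun x : ℝ => Real.arctan ((x + c) / b)) atTop (nhds (π / 2)) :=
      (Real.tendsto_arctan_atTop.mono_right nhdsWithin_le_nhds).comp
        ((tendsto_atTop_add_const_right atTop c tendsto_id).atTop_div_const hb)
    have := (hlogpart.add (ht1.const_mul (B / a))).add (ht2.const_mul (E / b))
    simpa using this
  have hbot : Tendsto F atBot (nhds (B / a * (-(π / 2)) + E / b * (-(π / 2)))) := by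
    have hlogpart : Tendsto (fun x : ℝ => A / 2 * Real.log (x ^ 2 + a ^ 2)
        - A / 2 * Real.log ((x + c) ^ 2 + b ^ 2)) atBot (nhds 0) := by
      have := (hratio atBot hinv_bot (eventually_ne_atBot 0)).const_mul (A / 2)
      simpa [mul_sub] using this
    have ht1 : Tendsto (fun x : ℝ => Real.arctan (x / a)) atBot (nhds (-(π / 2))) :=
      (Real.tendsto_arctan_atBot.mono_right nhdsWithin_le_nhds).comp
        (tendsto_id.atBot_div_const ha)
    have ht2 : Tendsto (fun x : ℝ => Real.arctan ((x + c) / b)) atBot (nhds (-(π / 2))) :=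
      (Real.tendsto_arctan_atBot.mono_right nhdsWithin_le_nhds).comp
        ((tendsto_atBot_add_const_right atBot c tendsto_id).atBot_div_const hb)
    have := (hlogpart.add (ht1.const_mul (B / a))).add (ht2.const_mul (E / b))
    simpa using this
  have hmain := MeasureTheory.integral_of_hasDerivAt_of_tendsto hderiv hint hbot htop
  rw [hf] at hmain
  rw [hmain, hB, hE]
  have hK : (0:ℝ) < c ^ 2 + (a + b) ^ 2 := by positivity
  have hK2 : (0:ℝ) < c ^ 2 + (a - b) ^ 2 := by positivity
  rw [hMdef]
  field_simp
  ring

theorem integral_product_lorentzians_shifted (a d c : ℝ) (ha : 0 < a) (hd : 0 ≤ d)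
    (hc : c ≠ 0) :
    ∫ x : ℝ, a * (a + d) / ((x ^ 2 + a ^ 2) * ((x + c) ^ 2 + (a + d) ^ 2)) =
      π * (2 * a + d) / (c ^ 2 + (2 * a + d) ^ 2) := by
  have h := key_lorentzian a (a + d) c ha (by linarith) hc
  rw [h]
  have h2 : a + (a + d) = 2 * a + d := by ring
  rw [h2]
end

section
/- For real numbers b > a > 1: ₃F₂(1, 1, a; 2, b; 1) = ((b − 1)/(a − 1)) · (ψ(b − 1) − ψ(b − a)), where ψ is the digamma function. -/
open Real

/-- Pochhammer symbol (rising factorial) for a real argument. -/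
noncomputable def poch (q : ℝ) (n : ℕ) : ℝ := ∏ i ∈ Finset.range n, (q + i)

/-- Gauss hypergeometric function ₂F₁, defined by its power series. -/
noncomputable def hyp2F1 (a b c x : ℝ) : ℝ :=
  ∑' n : ℕ, poch a n * poch b n / (poch c n * n.factorial) * x ^ n

/-- Generalized hypergeometric function ₃F₂, defined by its power series. -/
noncomputable def hyp3F2 (a₁ a₂ a₃ b₁ b₂ x : ℝ) : ℝ :=
  ∑' n : ℕ, poch a₁ n * poch a₂ n * poch a₃ n / (poch b₁ n * poch b₂ n * n.factorial) * x ^ n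
/-- The digamma function ψ(x) = Γ'(x)/Γ(x). -/
noncomputable def digamma (x : ℝ) : ℝ := deriv Real.Gamma x / Real.Gamma x

open MeasureTheory Set Filter Metric

noncomputable def Br (p q : ℝ) : ℝ := ∫ u in Set.Ioo (0:ℝ) 1, u ^ (p-1) * (1-u) ^ (q-1)


lemma poch_pos {x : ℝ} (hx : 0 < x) (n : ℕ) : 0 < poch x n := by
  refine Finset.prod_pos fun i _ => by positivity

lemma Gamma_add_nat {x : ℝ} (hx : 0 < x) (n : ℕ) :
    Real.Gamma (x + n) = poch x n * Real.Gamma x := by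
  induction n with
  | zero => simp [poch]
  | succ n ih =>
    have h1 : x + (n + 1 : ℕ) = (x + n) + 1 := by push_cast; ring
    rw [h1, Real.Gamma_add_one (by positivity), ih]
    unfold poch
    rw [Finset.prod_range_succ]
    ring


lemma integrableOn_beta {p q : ℝ} (hp : 0 < p) (hq : 0 < q) :
    IntegrableOn (fun u : ℝ => u ^ (p-1) * (1-u) ^ (q-1)) (Set.Ioo 0 1) := by
  have hc := Complex.betaIntegral_convergent (u := (p:ℂ)) (v := (q:ℂ)) (by simpa) (by simpa)
  have h2 := hc.norm
  rw [intervalIntegrable_iff_integrableOn_Ioo_of_le (by norm_num)] at h2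
  refine h2.congr_fun (fun x hx => ?_) measurableSet_Ioo
  obtain ⟨hx0, hx1⟩ := hx
  beta_reduce; rw [norm_mul]
  have e1 : (1 : ℂ) - (x:ℂ) = ((1 - x : ℝ) : ℂ) := by push_cast; ring
  rw [e1, Complex.norm_cpow_eq_rpow_re_of_pos hx0, Complex.norm_cpow_eq_rpow_re_of_pos (by linarith)]
  norm_num

lemma Gamma_mul_Gamma_eq {p q : ℝ} (hp : 0 < p) (hq : 0 < q) :
    Real.Gamma p * Real.Gamma q = Real.Gamma (p+q) * Br p q := by
  have key := Complex.Gamma_mul_Gamma_eq_betaIntegral (s := (p:ℂ)) (t := (q:ℂ))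
    (by simpa using hp) (by simpa using hq)
  have hBeta : Complex.betaIntegral p q = ((Br p q : ℝ) : ℂ) := by
    unfold Complex.betaIntegral Br
    rw [intervalIntegral.integral_of_le (by norm_num), integral_Ioc_eq_integral_Ioo]
    have hcong : ∀ x ∈ Set.Ioo (0:ℝ) 1,
        (x:ℂ) ^ ((p:ℂ) - 1) * ((1:ℂ) - (x:ℂ)) ^ ((q:ℂ) - 1)
          = ((x ^ (p-1) * (1-x) ^ (q-1) : ℝ) : ℂ) := by
      intro x hx
      obtain ⟨hx0, hx1⟩ := hx
      have e1 : (1 : ℂ) - (x:ℂ) = ((1 - x : ℝ) : ℂ) := by push_cast; ring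
      have e2 : ((p:ℂ) - 1) = ((p - 1 : ℝ) : ℂ) := by push_cast; ring
      have e3 : ((q:ℂ) - 1) = ((q - 1 : ℝ) : ℂ) := by push_cast; ring
      rw [e1, e2, e3, ← Complex.ofReal_cpow hx0.le, ← Complex.ofReal_cpow (by linarith),
        ← Complex.ofReal_mul]
    rw [setIntegral_congr_fun measurableSet_Ioo hcong]
    exact integral_ofReal
  rw [hBeta, ← Complex.ofReal_add, Complex.Gamma_ofReal, Complex.Gamma_ofReal,
    Complex.Gamma_ofReal, ← Complex.ofReal_mul, ← Complex.ofReal_mul] at key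
  exact_mod_cast key

lemma Br_eq {p q : ℝ} (hp : 0 < p) (hq : 0 < q) :
    Br p q = Real.Gamma p * Real.Gamma q / Real.Gamma (p+q) := by
  have h := Gamma_mul_Gamma_eq hp hq
  have hne : Real.Gamma (p+q) ≠ 0 := (Real.Gamma_pos_of_pos (by linarith)).ne'
  field_simp [hne]
  linarith [h]

lemma Br_pos {p q : ℝ} (hp : 0 < p) (hq : 0 < q) : 0 < Br p q := by
  rw [Br_eq hp hq]
  have := Real.Gamma_pos_of_pos hp
  have := Real.Gamma_pos_of_pos hq
  have := Real.Gamma_pos_of_pos (show 0 < p + q by linarith)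
  positivity

lemma hasDerivAt_Gamma_digamma {x : ℝ} (hx : 0 < x) :
    HasDerivAt Real.Gamma (digamma x * Real.Gamma x) x := by
  have hne : ∀ m : ℕ, x ≠ -(m:ℝ) := by
    intro m h
    have : (0:ℝ) ≤ (m:ℝ) := Nat.cast_nonneg m
    linarith
  have hd := Real.differentiableAt_Gamma hne
  have hΓ : Real.Gamma x ≠ 0 := (Real.Gamma_pos_of_pos hx).ne'
  have : digamma x * Real.Gamma x = deriv Real.Gamma x := by
    unfold digamma; field_simp
  rw [this]
  exact hd.hasDerivAt

lemma hasDerivAt_GammaQuot {p q : ℝ} (hp : 0 < p) (hq : 0 < q) :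
    HasDerivAt (fun t => Real.Gamma p * Real.Gamma t / Real.Gamma (p+t))
      (Br p q * (digamma q - digamma (p+q))) q := by
  have h1 : HasDerivAt (fun t => Real.Gamma p * Real.Gamma t)
      (Real.Gamma p * (digamma q * Real.Gamma q)) q :=
    (hasDerivAt_Gamma_digamma hq).const_mul _
  have hpq : 0 < p + q := by linarith
  have h2 : HasDerivAt (fun t => Real.Gamma (p+t))
      (digamma (p+q) * Real.Gamma (p+q)) q := by
    have hid : HasDerivAt (fun t : ℝ => p + t) 1 q := (hasDerivAt_id q).const_add p
    have := (hasDerivAt_Gamma_digamma hpq).comp q hid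
    rw [mul_one] at this; exact this
  have hne : Real.Gamma (p+q) ≠ 0 := (Real.Gamma_pos_of_pos hpq).ne'
  have h3 := h1.div h2 hne
  refine h3.congr_deriv ?_
  rw [Br_eq hp hq]
  field_simp

lemma meas_beta (p q : ℝ) :
    Measurable (fun u : ℝ => u ^ (p-1) * (1-u) ^ (q-1)) := by
  fun_prop

lemma meas_beta_log (p q : ℝ) :
    Measurable (fun u : ℝ => u ^ (p-1) * (1-u) ^ (q-1) * Real.log (1-u)) :=
  (meas_beta p q).mul (Real.measurable_log.comp (measurable_const.sub measurable_id))

/-- bound: for `u ∈ (0,1)`, `t` with `q/2 ≤ t`: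
    `(1-u)^(t-1) * |log (1-u)| ≤ (4/q) * (1-u)^(q/4-1)` -/
lemma key_bound {q u t : ℝ} (hq : 0 < q) (hu0 : 0 < u) (hu1 : u < 1) (ht : q/2 ≤ t) :
    (1-u) ^ (t-1) * |Real.log (1-u)| ≤ (4/q) * (1-u) ^ (q/4-1) := by
  have h0 : 0 < 1 - u := by linarith
  have h1 : 1 - u ≤ 1 := by linarith
  have e1 : (1-u) ^ (t-1) ≤ (1-u) ^ (q/2-1) :=
    Real.rpow_le_rpow_of_exponent_ge h0 h1 (by linarith)
  have habs : |Real.log (1-u)| = Real.log (1-u)⁻¹ := by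
    rw [Real.log_inv, abs_of_nonpos (Real.log_nonpos h0.le h1)]
  have e2 : Real.log (1-u)⁻¹ ≤ ((1-u)⁻¹) ^ (q/4) / (q/4) :=
    Real.log_le_rpow_div (inv_nonneg.mpr h0.le) (by positivity)
  have e3 : ((1-u)⁻¹) ^ (q/4) = (1-u) ^ (-(q/4)) := by
    rw [Real.inv_rpow h0.le, ← Real.rpow_neg h0.le]
  calc (1-u) ^ (t-1) * |Real.log (1-u)|
      ≤ (1-u) ^ (q/2-1) * ((1-u) ^ (-(q/4)) / (q/4)) := by
        rw [habs]
        refine mul_le_mul e1 (by rw [← e3]; exact e2)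
          (Real.log_nonneg (by rw [le_inv_comm₀ one_pos h0]; simpa using h1))
          (le_of_lt (Real.rpow_pos_of_pos h0 _))
    _ = (4/q) * ((1-u) ^ (q/2-1) * (1-u) ^ (-(q/4))) := by ring
    _ = (4/q) * (1-u) ^ (q/4-1) := by
        rw [← Real.rpow_add h0]; norm_num; left; ring_nf

lemma hasDerivAt_Br_full {p q : ℝ} (hp : 0 < p) (hq : 0 < q) :
    IntegrableOn (fun u : ℝ => u ^ (p-1) * (1-u) ^ (q-1) * Real.log (1-u)) (Set.Ioo 0 1) ∧
    HasDerivAt (fun t => Br p t)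
      (∫ u in Set.Ioo (0:ℝ) 1, u ^ (p-1) * (1-u) ^ (q-1) * Real.log (1-u)) q := by
  have hq4 : 0 < q/4 := by positivity
  have key := hasDerivAt_integral_of_dominated_loc_of_deriv_le
    (μ := volume.restrict (Set.Ioo (0:ℝ) 1))
    (F := fun t u => u ^ (p-1) * (1-u) ^ (t-1))
    (F' := fun t u => u ^ (p-1) * (1-u) ^ (t-1) * Real.log (1-u))
    (x₀ := q)
    (bound := fun u => (4/q) * (u ^ (p-1) * (1-u) ^ (q/4-1)))
    (s := ball q (q/2)) (ball_mem_nhds q (by positivity))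
    (Eventually.of_forall fun t => (meas_beta p t).aestronglyMeasurable)
    (integrableOn_beta hp hq)
    ((meas_beta_log p q).aestronglyMeasurable)
    ?_ ?_ ?_
  · exact ⟨key.1, key.2⟩
  · -- bound
    rw [ae_restrict_iff' measurableSet_Ioo]
    refine Eventually.of_forall fun u hu => ?_
    obtain ⟨hu0, hu1⟩ := hu
    intro t ht
    rw [mem_ball, Real.dist_eq, abs_lt] at ht
    have htq : q/2 ≤ t := by linarith
    have hb := key_bound hq hu0 hu1 htq
    have hup : 0 < u ^ (p-1) := Real.rpow_pos_of_pos hu0 _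
    calc ‖u ^ (p-1) * (1-u) ^ (t-1) * Real.log (1-u)‖
        = u ^ (p-1) * ((1-u) ^ (t-1) * |Real.log (1-u)|) := by
          rw [norm_mul, norm_mul]
          simp only [Real.norm_eq_abs]
          rw [abs_of_pos hup, abs_of_pos (Real.rpow_pos_of_pos (by linarith) _)]
          ring
      _ ≤ u ^ (p-1) * ((4/q) * (1-u) ^ (q/4-1)) := by
          exact mul_le_mul_of_nonneg_left hb hup.le
      _ = (4/q) * (u ^ (p-1) * (1-u) ^ (q/4-1)) := by ring
  · exact (integrableOn_beta hp hq4).const_mul _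
  · -- differentiability
    rw [ae_restrict_iff' measurableSet_Ioo]
    refine Eventually.of_forall fun u hu => ?_
    obtain ⟨hu0, hu1⟩ := hu
    intro t _
    have h0 : 0 < 1 - u := by linarith
    have hd : HasDerivAt (fun s : ℝ => (1-u) ^ s) ((1-u) ^ (t-1) * Real.log (1-u)) (t-1) :=
      (Real.hasStrictDerivAt_const_rpow h0 (t-1)).hasDerivAt
    have hsub : HasDerivAt (fun s : ℝ => s - 1) 1 t := (hasDerivAt_id t).sub_const 1
    have := (hd.comp t hsub).const_mul (u ^ (p-1))
    simpa [mul_comm, mul_assoc, mul_left_comm] using this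

lemma integral_beta_log {p q : ℝ} (hp : 0 < p) (hq : 0 < q) :
    ∫ u in Set.Ioo (0:ℝ) 1, u ^ (p-1) * (1-u) ^ (q-1) * (-Real.log (1-u)) =
      Br p q * (digamma (p+q) - digamma q) := by
  have h1 := (hasDerivAt_Br_full hp hq).2
  have h2 := hasDerivAt_GammaQuot hp hq
  have heq : (fun t => Real.Gamma p * Real.Gamma t / Real.Gamma (p+t)) =ᶠ[nhds q]
      (fun t => Br p t) := by
    filter_upwards [isOpen_Ioi.eventually_mem (show q ∈ Set.Ioi (0:ℝ) from hq)] with t ht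
    rw [Br_eq hp ht]
  have h2' : HasDerivAt (fun t => Br p t) (Br p q * (digamma q - digamma (p+q))) q :=
    h2.congr_of_eventuallyEq heq.symm
  have huniq := h1.unique h2'
  have : ∫ u in Set.Ioo (0:ℝ) 1, u ^ (p-1) * (1-u) ^ (q-1) * (-Real.log (1-u)) =
      -∫ u in Set.Ioo (0:ℝ) 1, u ^ (p-1) * (1-u) ^ (q-1) * Real.log (1-u) := by
    rw [← integral_neg]
    congr 1; ext u; ring
  rw [this, huniq]; ring

/-- The central series identity. -/
lemma digamma_series {α c : ℝ} (hα : 0 < α) (hc : 0 < c) :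
    HasSum (fun m : ℕ => poch α m / (m * poch (α+c) m))
      (digamma (α+c) - digamma c) := by
  set β := α + c with hβ
  have hβ0 : 0 < β := by positivity
  -- the functions
  set f : ℕ → ℝ → ℝ := fun m u => u ^ (α-1) * (1-u) ^ (c-1) * (u ^ m / m) with hf
  set h : ℝ → ℝ := fun u => u ^ (α-1) * (1-u) ^ (c-1) * (-Real.log (1-u)) with hh
  -- pointwise sum on Ioo
  have hptwise : ∀ u ∈ Set.Ioo (0:ℝ) 1, HasSum (fun m => f m u) (h u) := by
    intro u hu
    obtain ⟨hu0, hu1⟩ := hu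
    have habs : |u| < 1 := by rw [abs_of_pos hu0]; exact hu1
    have hlog := Real.hasSum_pow_div_log_of_abs_lt_one habs
    -- sum over m of u^m/m equals -log(1-u) (term m=0 is zero)
    have hlog' : HasSum (fun m : ℕ => (u:ℝ) ^ m / m) (-Real.log (1-u)) := by
      have key : HasSum (fun n : ℕ => (fun m : ℕ => (u:ℝ) ^ m / m) (n + 1))
          (-Real.log (1-u)) := by
        convert hlog using 2 with n
        push_cast; ring
      have := (hasSum_nat_add_iff (f := fun m : ℕ => (u:ℝ) ^ m / m) 1).1 key
      simpa using this
    exact hlog'.mul_left _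
  -- integrability of each f m
  have hint : ∀ m : ℕ, IntegrableOn (f m) (Set.Ioo 0 1) := by
    intro m
    have : IntegrableOn (fun u : ℝ => (1/(m:ℝ)) * (u ^ ((α+m)-1) * (1-u) ^ (c-1)))
        (Set.Ioo 0 1) := ((integrableOn_beta (by positivity) hc).const_mul _)
    refine this.congr_fun (fun u hu => ?_) measurableSet_Ioo
    obtain ⟨hu0, hu1⟩ := hu
    have : u ^ ((α+m)-1) = u ^ (α-1) * u ^ m := by
      rw [← Real.rpow_natCast u m, ← Real.rpow_add hu0]
      congr 1; ring
    beta_reduce; rw [this, hf]; ring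
  -- value of each integral
  have hval : ∀ m : ℕ,
      ∫ u in Set.Ioo (0:ℝ) 1, f m u = poch α m / (m * poch β m) * Br α c := by
    intro m
    have hstep : ∫ u in Set.Ioo (0:ℝ) 1, f m u
        = (1/(m:ℝ)) * Br (α + m) c := by
      unfold Br
      rw [← integral_const_mul]
      refine setIntegral_congr_fun measurableSet_Ioo (fun u hu => ?_)
      obtain ⟨hu0, hu1⟩ := hu
      have : u ^ ((α+m)-1) = u ^ (α-1) * u ^ m := by
        rw [← Real.rpow_natCast u m, ← Real.rpow_add hu0]
        congr 1; ring
      rw [hf]; simp only []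
      rw [this]; ring
    rw [hstep]
    have hB : Br (α + m) c = poch α m / poch β m * Br α c := by
      rw [Br_eq (by positivity) hc, Br_eq hα hc]
      have e1 : Real.Gamma (α + m) = poch α m * Real.Gamma α := Gamma_add_nat hα m
      have e2 : α + m + c = β + m := by rw [hβ]; ring
      have e3 : Real.Gamma (β + m) = poch β m * Real.Gamma β := Gamma_add_nat hβ0 m
      rw [e1, e2, e3, hβ]
      have h1 : Real.Gamma (α+c) ≠ 0 := (Real.Gamma_pos_of_pos (by positivity)).ne'
      have h2 : (0:ℝ) < poch (α+c) m := poch_pos (by positivity) m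
      field_simp
    rw [hB]
    field_simp
  -- monotone convergence
  have hnonneg : ∀ m : ℕ, ∀ u ∈ Set.Ioo (0:ℝ) 1, 0 ≤ f m u := by
    intro m u hu
    obtain ⟨hu0, hu1⟩ := hu
    have := Real.rpow_pos_of_pos hu0 (α-1)
    have := Real.rpow_pos_of_pos (show (0:ℝ) < 1-u by linarith) (c-1)
    have : (0:ℝ) ≤ u ^ m / m := by positivity
    rw [hf]; positivity
  have hinth : IntegrableOn h (Set.Ioo (0:ℝ) 1) := by
    refine IntegrableOn.congr_fun
      (g := h) ((hasDerivAt_Br_full hα hc).1.neg) (fun u hu => ?_) measurableSet_Ioo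
    show -(u ^ (α-1) * (1-u) ^ (c-1) * Real.log (1-u)) = h u
    rw [hh]; ring
  have htend : Tendsto (fun n => ∑ m ∈ Finset.range n, ∫ u in Set.Ioo (0:ℝ) 1, f m u)
      atTop (nhds (∫ u in Set.Ioo (0:ℝ) 1, h u)) := by
    have := integral_tendsto_of_tendsto_of_monotone
      (μ := volume.restrict (Set.Ioo (0:ℝ) 1))
      (f := fun n u => ∑ m ∈ Finset.range n, f m u) (F := h)
      (fun n => integrable_finset_sum _ (fun m _ => hint m)) hinth ?_ ?_
    · convert this using 2 with n
      rw [integral_finset_sum _ (fun m _ => hint m)]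
    · rw [ae_restrict_iff' measurableSet_Ioo]
      refine Eventually.of_forall fun u hu => ?_
      intro i j hij
      exact Finset.sum_le_sum_of_subset_of_nonneg (Finset.range_subset_range.mpr hij)
        (fun m _ _ => hnonneg m u hu)
    · rw [ae_restrict_iff' measurableSet_Ioo]
      exact Eventually.of_forall fun u hu => (hptwise u hu).tendsto_sum_nat
  -- conclude
  have hIval : (∫ u in Set.Ioo (0:ℝ) 1, h u) = Br α c * (digamma β - digamma c) := by
    rw [hh]
    exact integral_beta_log hα hc
  -- summability from bounded partial sums
  have hsummable : Summable (fun m => poch α m / (m * poch β m) * Br α c) := by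
    apply summable_of_sum_range_le (c := Br α c * (digamma β - digamma c))
    · intro m
      have h1 : (0:ℝ) < poch α m := poch_pos hα m
      have h2 : (0:ℝ) < poch β m := poch_pos hβ0 m
      have h3 : (0:ℝ) < Br α c := Br_pos hα hc
      positivity
    · intro n
      simp_rw [← hval]
      rw [← integral_finset_sum _ (fun m _ => hint m)]
      rw [← hIval]
      apply setIntegral_mono_on (integrable_finset_sum _ (fun m _ => hint m)) hinth
        measurableSet_Ioo
      intro u hu
      exact sum_le_hasSum _ (fun m _ => hnonneg m u hu) (hptwise u hu)
  have hfinal : HasSum (fun m => poch α m / (m * poch β m) * Br α c)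
      (Br α c * (digamma β - digamma c)) := by
    rw [hsummable.hasSum_iff_tendsto_nat]
    simp_rw [hval] at htend
    rw [hIval] at htend
    exact htend
  have hBne : Br α c ≠ 0 := (Br_pos hα hc).ne'
  have := hfinal.mul_right (Br α c)⁻¹
  simp only [mul_assoc, mul_inv_cancel₀ hBne, mul_one] at this
  rw [show digamma β - digamma c = Br α c * ((digamma β - digamma c) * (Br α c)⁻¹) by
    rw [mul_comm (Br α c), mul_assoc, inv_mul_cancel₀ hBne, mul_one]]
  exact this


lemma poch_one (n : ℕ) : poch 1 n = n.factorial := by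
  induction n with
  | zero => simp [poch]
  | succ n ih =>
    unfold poch at *
    rw [Finset.prod_range_succ, ih]
    push_cast [Nat.factorial_succ]
    ring

lemma poch_two (n : ℕ) : poch 2 n = (n+1).factorial := by
  induction n with
  | zero => simp [poch]
  | succ n ih =>
    unfold poch at *
    rw [Finset.prod_range_succ, ih]
    push_cast [Nat.factorial_succ]
    ring

lemma poch_sub_one {x : ℝ} (n : ℕ) : poch (x - 1) (n + 1) = (x - 1) * poch x n := by
  unfold poch
  rw [Finset.prod_range_succ']
  have : ∀ i ∈ Finset.range n, (x - 1 + ((i:ℕ) + 1 : ℕ)) = x + i := by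
    intro i _; push_cast; ring
  rw [Finset.prod_congr rfl this]
  simp [mul_comm]

theorem hyp3F2_digamma (a b : ℝ) (hab : a < b) (ha : 1 < a) :
    hyp3F2 1 1 a 2 b 1 = ((b - 1) / (a - 1)) * (digamma (b - 1) - digamma (b - a)) := by
  have hα : 0 < a - 1 := by linarith
  have hc : 0 < b - a := by linarith
  have hsum := digamma_series hα hc
  have hadd : a - 1 + (b - a) = b - 1 := by ring
  rw [hadd] at hsum
  -- shift the sum
  have h0 : poch (a-1) 0 / ((0:ℕ) * poch (b-1) 0) = 0 := by simp
  have hshift : HasSum (fun n : ℕ => poch (a-1) (n+1) / ((n+1 : ℕ) * poch (b-1) (n+1)))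
      (digamma (b-1) - digamma (b-a)) := by
    refine (hasSum_nat_add_iff
      (f := fun m : ℕ => poch (a-1) m / (m * poch (b-1) m)) 1).2 ?_
    simpa [h0] using hsum
  have hmul := hshift.mul_left ((b - 1) / (a - 1))
  have hterm : ∀ n : ℕ,
      poch 1 n * poch 1 n * poch a n / (poch 2 n * poch b n * n.factorial) * (1:ℝ) ^ n
        = ((b - 1) / (a - 1)) * (poch (a-1) (n+1) / ((n+1 : ℕ) * poch (b-1) (n+1))) := by
    intro n
    rw [poch_one, poch_two, poch_sub_one, poch_sub_one, one_pow, mul_one]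
    have hfa : ((n+1).factorial : ℝ) = (n+1) * n.factorial := by
      push_cast [Nat.factorial_succ]; ring
    have hb1 : b - 1 ≠ 0 := by linarith
    have ha1 : a - 1 ≠ 0 := by linarith
    have hpb : (0:ℝ) < poch b n := poch_pos (by linarith) n
    have hfn : (n.factorial : ℝ) ≠ 0 := by positivity
    have hn1 : ((n:ℝ) + 1) ≠ 0 := by positivity
    rw [hfa]
    push_cast
    field_simp
  unfold hyp3F2
  rw [tsum_congr hterm]
  exact hmul.tsum_eq
end

section
/- Connection formula specialization: for t in (0, 1), ₂F₁(1, 4/3; 5/3; 1 − t) = −₂F₁(1, 4/3; 5/3; t) + (2/3) · (Γ(2/3)²/Γ(4/3)) · t^{−2/3} (1 − t)^{−2/3}. -/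
open Real

namespace ConnProof

open MeasureTheory intervalIntegral

/-! ### Pochhammer basics -/

lemma poch_succ (q : ℝ) (n : ℕ) : poch q (n+1) = poch q n * (q + n) :=
  Finset.prod_range_succ _ _

lemma poch_pos {q : ℝ} (hq : 0 < q) (n : ℕ) : 0 < poch q n := by
  induction n with
  | zero => simp [poch]
  | succ n ih => rw [poch_succ]; positivity

lemma poch_one (n : ℕ) : poch 1 n = n.factorial := by
  induction n with
  | zero => simp [poch]
  | succ n ih => rw [poch_succ, ih, Nat.factorial_succ]; push_cast; ring

noncomputable def c (n : ℕ) : ℝ := poch (4/3) n / poch (5/3) n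

lemma c_pos (n : ℕ) : 0 < c n :=
  div_pos (poch_pos (by norm_num) n) (poch_pos (by norm_num) n)

lemma c_zero : c 0 = 1 := by simp [c, poch]

lemma c_rec (n : ℕ) : (5/3 + n) * c (n+1) = (4/3 + n) * c n := by
  have h5 := (poch_pos (q := 5/3) (by norm_num) n).ne'
  unfold c
  rw [poch_succ, poch_succ]
  field_simp

lemma c_le_one (n : ℕ) : c n ≤ 1 := by
  induction n with
  | zero => simp [c_zero]
  | succ n ih =>
    have h := c_rec n
    have h5 : (0:ℝ) < 5/3 + n := by positivity
    have h4 : (0:ℝ) < 4/3 + n := by positivity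
    have : c (n+1) = (4/3 + n) / (5/3 + n) * c n := by
      field_simp
      linarith [h]
    rw [this]
    calc (4/3 + (n:ℝ)) / (5/3 + n) * c n ≤ 1 * c n := by
          apply mul_le_mul_of_nonneg_right _ (c_pos n).le
          rw [div_le_one h5]; linarith
      _ ≤ 1 := by simpa using ih

lemma abs_c (n : ℕ) : |c n| ≤ 1 := by
  rw [abs_of_pos (c_pos n)]; exact c_le_one n

/-! ### Summability helpers -/

lemma summable_geom_lin {r : ℝ} (hr0 : 0 ≤ r) (hr1 : r < 1) :
    Summable (fun n : ℕ => ((n:ℝ)+1) * r ^ n) := by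
  have h1 : Summable (fun n : ℕ => (n:ℝ) * r ^ n) := by
    simpa using summable_pow_mul_geometric_of_norm_lt_one 1
      (r := r) (by rw [Real.norm_eq_abs, abs_of_nonneg hr0]; exact hr1)
  have h2 : Summable (fun n : ℕ => r ^ n) := summable_geometric_of_lt_one hr0 hr1
  simpa [add_mul] using h1.add h2

lemma summable_of_bound {x : ℝ} (hx : |x| < 1) {f : ℕ → ℝ} {C : ℝ}
    (hf : ∀ n, |f n| ≤ C * (((n:ℝ)+1) * |x| ^ n)) : Summable f := by
  refine Summable.of_norm ?_
  refine Summable.of_nonneg_of_le (fun n => norm_nonneg _) (fun n => ?_)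
    (((summable_geom_lin (abs_nonneg x) hx)).mul_left C)
  simpa using hf n

/-! ### The function F and its derivative -/

noncomputable def F (x : ℝ) : ℝ := ∑' n : ℕ, c n * x ^ n
noncomputable def D (x : ℝ) : ℝ := ∑' n : ℕ, ((n:ℝ)+1) * c (n+1) * x ^ n

lemma summable_F {x : ℝ} (hx : |x| < 1) : Summable (fun n : ℕ => c n * x ^ n) := by
  refine summable_of_bound hx (C := 1) (fun n => ?_)
  rw [abs_mul, abs_pow, one_mul]
  have h1 : (1:ℝ) ≤ (n:ℝ)+1 := by linarith [Nat.cast_nonneg (α:=ℝ) n]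
  calc |c n| * |x| ^ n ≤ 1 * |x| ^ n := by
        exact mul_le_mul_of_nonneg_right (abs_c n) (by positivity)
    _ ≤ ((n:ℝ)+1) * |x| ^ n := by
        exact mul_le_mul_of_nonneg_right h1 (by positivity)

lemma F_hasDerivAt {x : ℝ} (hx : x ∈ Set.Ioo (0:ℝ) 1) : HasDerivAt F (D x) x := by
  obtain ⟨hx0, hx1⟩ := hx
  set r : ℝ := (1+x)/2 with hr
  have hr0 : 0 < r := by positivity
  have hr1 : r < 1 := by simp only [hr]; linarith
  have hxr : |x| < r := by rw [abs_of_pos hx0]; simp only [hr]; linarith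
  have hrr : |r| < 1 := by rw [abs_of_pos hr0]; exact hr1
  have hsum_u : Summable (fun n : ℕ => (1/r) * ((n:ℝ) * r ^ n)) := by
    refine Summable.mul_left _ ?_
    simpa using summable_pow_mul_geometric_of_norm_lt_one 1
      (r := r) (by rw [Real.norm_eq_abs, abs_of_pos hr0]; exact hr1)
  have key : HasDerivAt (fun y => ∑' n : ℕ, c n * y ^ n)
      (∑' n : ℕ, c n * ((n:ℕ) * x ^ (n-1))) x := by
    refine hasDerivAt_tsum_of_isPreconnected (g := fun n y => c n * y ^ n)
      (g' := fun n y => c n * ((n:ℕ) * y ^ (n-1))) (y₀ := x) hsum_u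
      (isOpen_Ioo (a := -r) (b := r))
      (isPreconnected_Ioo) (fun n y _ => ?_) (fun n y hy => ?_) ?_ ?_ ?_
    · exact (hasDerivAt_pow n y).const_mul (c n)
    · obtain ⟨hy1, hy2⟩ := hy
      have hyr : |y| ≤ r := by rw [abs_le]; constructor <;> linarith
      rw [Real.norm_eq_abs]
      match n with
      | 0 => simp only [Nat.cast_zero, zero_mul, mul_zero, abs_zero]; positivity
      | (m+1) =>
        have : |c (m+1) * (((m:ℕ)+1 : ℕ) * y ^ (m+1-1))| ≤ ((m:ℝ)+1) * r ^ m := by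
          rw [abs_mul, abs_mul, abs_pow]
          push_cast
          calc |c (m+1)| * (|((m:ℝ)+1)| * |y| ^ m)
              ≤ 1 * (((m:ℝ)+1) * r ^ m) := by
                apply mul_le_mul (abs_c _) _ (by positivity) (by norm_num)
                apply mul_le_mul (le_of_eq (abs_of_nonneg (by positivity))) _ (by positivity) (by positivity)
                exact pow_le_pow_left₀ (abs_nonneg y) hyr m
            _ = ((m:ℝ)+1) * r ^ m := by ring
        calc |c (m+1) * (((m+1:ℕ):ℝ) * y ^ (m+1-1))| ≤ ((m:ℝ)+1) * r ^ m := by push_cast at this ⊢; exact this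
          _ = (1/r) * (((m+1:ℕ):ℝ) * r ^ (m+1)) := by
              push_cast; field_simp; ring
    · exact Set.mem_Ioo.2 ⟨by linarith, by linarith⟩
    · exact summable_F (hxr.trans hr1)
    · exact Set.mem_Ioo.2 ⟨by linarith [abs_lt.1 hxr], (abs_lt.1 hxr).2⟩
  have hsum : Summable (fun n : ℕ => c n * ((n:ℕ) * x ^ (n-1))) := by
    refine summable_of_bound (hxr.trans hr1) (C := 1/x) (fun n => ?_)
    match n with
    | 0 => simp only [Nat.cast_zero, zero_mul, mul_zero, abs_zero]; positivity
    | (m+1) =>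
      have hxx : |x| = x := abs_of_pos hx0
      rw [abs_mul, abs_mul, abs_pow, hxx]
      push_cast
      rw [abs_of_nonneg (by positivity : (0:ℝ) ≤ (m:ℝ)+1)]
      have h1 : |c (m+1)| * (((m:ℝ)+1) * x ^ m) ≤ 1 * (((m:ℝ)+1) * x ^ m) :=
        mul_le_mul_of_nonneg_right (abs_c _) (by positivity)
      have h2 : (1/x) * (((m:ℝ)+1+1) * x ^ (m+1)) = ((m:ℝ)+2) * x ^ m := by
        field_simp; ring
      calc |c (m+1)| * (((m:ℝ)+1) * x ^ m) ≤ 1 * (((m:ℝ)+1) * x ^ m) := h1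
        _ ≤ ((m:ℝ)+2) * x ^ m := by nlinarith [pow_nonneg hx0.le m]
        _ = (1/x) * (((m:ℝ)+1+1) * x ^ (m+1)) := h2.symm
  have heq : (∑' n : ℕ, c n * ((n:ℕ) * x ^ (n-1))) = D x := by
    rw [Summable.tsum_eq_zero_add hsum]
    simp only [Nat.cast_zero, zero_mul, mul_zero, abs_zero, zero_add]
    unfold D
    refine tsum_congr (fun n => ?_)
    push_cast
    ring_nf
  rw [← heq]
  exact key

/-! ### The first-order ODE -/

lemma summable_coeff_pow_succ {x : ℝ} (hx : |x| < 1) {g : ℕ → ℝ}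
    (hg : ∀ n, |g n| ≤ (n:ℝ)+1) : Summable (fun n => g n * x ^ (n+1)) := by
  refine summable_of_bound hx (C := 1) fun n => ?_
  rw [abs_mul, abs_pow, pow_succ]
  calc |g n| * (|x| ^ n * |x|) ≤ ((n:ℝ)+1) * (|x| ^ n * |x|) :=
        mul_le_mul_of_nonneg_right (hg n) (by positivity)
    _ ≤ ((n:ℝ)+1) * (|x| ^ n * 1) := by
        refine mul_le_mul_of_nonneg_left ?_ (by positivity)
        exact mul_le_mul_of_nonneg_left hx.le (by positivity)
    _ = 1 * (((n:ℝ)+1) * |x| ^ n) := by ring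

lemma ode {x : ℝ} (hx : x ∈ Set.Ioo (0:ℝ) 1) :
    x*(1-x)*D x + (2/3)*(1-2*x)*F x = 2/3 := by
  obtain ⟨hx0, hx1⟩ := hx
  have hx' : |x| < 1 := by rw [abs_of_pos hx0]; exact hx1
  have hA : Summable (fun n : ℕ => (((n:ℝ)+1)*c (n+1)) * x ^ (n+1)) := by
    refine summable_coeff_pow_succ hx' (fun n => ?_)
    rw [abs_mul, abs_of_nonneg (by positivity : (0:ℝ) ≤ (n:ℝ)+1)]
    calc ((n:ℝ)+1) * |c (n+1)| ≤ ((n:ℝ)+1) * 1 := mul_le_mul_of_nonneg_left (abs_c _) (by positivity)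
      _ = (n:ℝ)+1 := by ring
  have hB : Summable (fun n : ℕ => ((n:ℝ)*c n) * x ^ (n+1)) := by
    refine summable_coeff_pow_succ hx' (fun n => ?_)
    rw [abs_mul, abs_of_nonneg (by positivity : (0:ℝ) ≤ (n:ℝ))]
    calc (n:ℝ) * |c n| ≤ (n:ℝ) * 1 := mul_le_mul_of_nonneg_left (abs_c _) (by positivity)
      _ ≤ (n:ℝ)+1 := by linarith
  have hT : Summable (fun n : ℕ => c (n+1) * x ^ (n+1)) := by
    refine summable_coeff_pow_succ hx' (fun n => ?_)
    calc |c (n+1)| ≤ 1 := abs_c _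
      _ ≤ (n:ℝ)+1 := by linarith [Nat.cast_nonneg (α := ℝ) n]
  have hS : Summable (fun n : ℕ => c n * x ^ (n+1)) := by
    refine summable_coeff_pow_succ hx' (fun n => ?_)
    calc |c n| ≤ 1 := abs_c _
      _ ≤ (n:ℝ)+1 := by linarith [Nat.cast_nonneg (α := ℝ) n]
  have hF : Summable (fun n : ℕ => c n * x ^ n) := summable_F hx'
  have e1 : x * D x = ∑' n : ℕ, (((n:ℝ)+1)*c (n+1)) * x ^ (n+1) := by
    rw [D, ← tsum_mul_left]
    exact tsum_congr fun n => by ring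
  have e2 : x^2 * D x = ∑' n : ℕ, ((n:ℝ)*c n) * x ^ (n+1) := by
    rw [D, ← tsum_mul_left, Summable.tsum_eq_zero_add hB]
    simp only [Nat.cast_zero, zero_mul, zero_add]
    exact tsum_congr fun n => by push_cast; ring
  have e3 : F x = 1 + ∑' n : ℕ, c (n+1) * x ^ (n+1) := by
    rw [F, Summable.tsum_eq_zero_add hF, c_zero]
    norm_num
  have e4 : x * F x = ∑' n : ℕ, c n * x ^ (n+1) := by
    rw [F, ← tsum_mul_left]
    exact tsum_congr fun n => by ring
  have main : (∑' n : ℕ, (((n:ℝ)+1)*c (n+1)) * x ^ (n+1))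
      + (2/3) * (∑' n : ℕ, c (n+1) * x ^ (n+1))
      - (∑' n : ℕ, ((n:ℝ)*c n) * x ^ (n+1))
      - (4/3) * (∑' n : ℕ, c n * x ^ (n+1)) = 0 := by
    rw [← tsum_mul_left (a := (2:ℝ)/3), ← tsum_mul_left (a := (4:ℝ)/3),
      ← Summable.tsum_add hA (hT.mul_left _), ← Summable.tsum_sub ((hA.add (hT.mul_left _))) hB,
      ← Summable.tsum_sub (((hA.add (hT.mul_left _))).sub hB) (hS.mul_left _)]
    have : ∀ n : ℕ, (((n:ℝ)+1)*c (n+1)) * x ^ (n+1) + (2/3) * (c (n+1) * x ^ (n+1))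
        - ((n:ℝ)*c n) * x ^ (n+1) - (4/3) * (c n * x ^ (n+1)) = 0 := by
      intro n
      linear_combination x ^ (n+1) * c_rec n
    rw [tsum_congr this, tsum_zero]
  calc x*(1-x)*D x + (2/3)*(1-2*x)*F x
      = (x * D x) - (x^2 * D x) + (2/3) * F x - (4/3) * (x * F x) := by ring
    _ = 2/3 + ((∑' n : ℕ, (((n:ℝ)+1)*c (n+1)) * x ^ (n+1))
          + (2/3) * (∑' n : ℕ, c (n+1) * x ^ (n+1))
          - (∑' n : ℕ, ((n:ℝ)*c n) * x ^ (n+1))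
          - (4/3) * (∑' n : ℕ, c n * x ^ (n+1))) := by
        rw [e1, e2, e4, e3]; ring
    _ = 2/3 := by rw [main]; ring

/-! ### The integral -/

noncomputable def bint (u : ℝ) : ℝ := u ^ (-(1:ℝ)/3) * (1-u) ^ (-(1:ℝ)/3)

lemma bint_symm (u : ℝ) : bint (1 - u) = bint u := by
  unfold bint; rw [sub_sub_cancel]; ring

lemma bint_int_left : IntervalIntegrable bint volume 0 (1/2) := by
  have h1 : IntervalIntegrable (fun u : ℝ => u ^ (-(1:ℝ)/3)) volume 0 (1/2) :=
    intervalIntegrable_rpow' (by norm_num)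
  have h2 : ContinuousOn (fun u : ℝ => (1-u) ^ (-(1:ℝ)/3)) (Set.uIcc 0 (1/2)) := by
    refine ContinuousOn.rpow_const ((continuous_const.sub continuous_id).continuousOn) ?_
    intro u hu
    rw [Set.uIcc_of_le (by norm_num : (0:ℝ) ≤ 1/2)] at hu
    exact Or.inl (show (1:ℝ) - u ≠ 0 from (by nlinarith [hu.2] : (0:ℝ) < 1 - u).ne')
  exact h1.mul_continuousOn h2

lemma bint_int01 : IntervalIntegrable bint volume 0 1 := by
  have h2 : IntervalIntegrable bint volume (1/2) 1 := by
    have := (bint_int_left.comp_sub_left 1)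
    norm_num at this
    have heq : (fun x : ℝ => bint (1 - x)) = bint := funext bint_symm
    rw [heq] at this
    exact this.symm
  exact bint_int_left.trans h2

lemma bint_int {a b : ℝ} (ha : a ∈ Set.Icc (0:ℝ) 1) (hb : b ∈ Set.Icc (0:ℝ) 1) :
    IntervalIntegrable bint volume a b := by
  refine bint_int01.mono_set ?_
  rw [Set.uIcc_of_le (by norm_num : (0:ℝ) ≤ 1)]
  exact Set.uIcc_subset_Icc ha hb

noncomputable def I (x : ℝ) : ℝ := ∫ u in (0:ℝ)..x, bint u

lemma I_hasDerivAt {x : ℝ} (hx : x ∈ Set.Ioo (0:ℝ) 1) : HasDerivAt I (bint x) x := by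
  obtain ⟨hx0, hx1⟩ := hx
  have hcont : ∀ y ∈ Set.Ioo (0:ℝ) 1, ContinuousAt bint y := by
    intro y hy
    obtain ⟨hy0, hy1⟩ := hy
    apply ContinuousAt.mul
    · exact Real.continuousAt_rpow_const _ _ (Or.inl hy0.ne')
    · exact (Real.continuousAt_rpow_const _ _ (Or.inl (by linarith : (0:ℝ) < 1 - y).ne')).comp
        ((continuous_const.sub continuous_id).continuousAt)
  refine integral_hasDerivAt_right (bint_int ?_ ?_) ?_ (hcont x ⟨hx0, hx1⟩)
  · exact ⟨le_refl 0, by norm_num⟩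
  · exact ⟨hx0.le, hx1.le⟩
  · exact ContinuousAt.stronglyMeasurableAtFilter isOpen_Ioo hcont x ⟨hx0, hx1⟩

noncomputable def Phi (x : ℝ) : ℝ :=
  x ^ ((2:ℝ)/3) * (1-x) ^ ((2:ℝ)/3) * F x - (2/3) * I x

lemma Phi_hasDerivAt {x : ℝ} (hx : x ∈ Set.Ioo (0:ℝ) 1) : HasDerivAt Phi 0 x := by
  obtain ⟨hx0, hx1⟩ := hx
  have h1x : (0:ℝ) < 1 - x := by linarith
  have h1 : HasDerivAt (fun y : ℝ => y ^ ((2:ℝ)/3)) ((2/3) * x ^ ((2:ℝ)/3 - 1)) x :=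
    Real.hasDerivAt_rpow_const (Or.inl hx0.ne')
  have h2 : HasDerivAt (fun y : ℝ => (1-y) ^ ((2:ℝ)/3))
      ((-1) * ((2:ℝ)/3) * (1-x) ^ ((2:ℝ)/3 - 1)) x := by
    have hbase : HasDerivAt (fun y : ℝ => 1 - y) (-1) x := by
      simpa using (hasDerivAt_id x).const_sub 1
    exact hbase.rpow_const (Or.inl h1x.ne')
  have hFd := F_hasDerivAt ⟨hx0, hx1⟩
  have hId := (I_hasDerivAt ⟨hx0, hx1⟩).const_mul ((2:ℝ)/3)
  have total := ((h1.mul h2).mul hFd).sub hId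
  have hval : ((2/3) * x ^ ((2:ℝ)/3 - 1) * (1-x) ^ ((2:ℝ)/3)
        + x ^ ((2:ℝ)/3) * ((-1) * ((2:ℝ)/3) * (1-x) ^ ((2:ℝ)/3 - 1))) * F x
        + x ^ ((2:ℝ)/3) * (1-x) ^ ((2:ℝ)/3) * D x - (2/3) * bint x = 0 := by
    have e : (2:ℝ)/3 - 1 = -(1:ℝ)/3 := by norm_num
    have ha : x ^ ((2:ℝ)/3) = x ^ (-(1:ℝ)/3) * x := by
      conv_lhs => rw [show ((2:ℝ)/3) = -(1:ℝ)/3 + 1 by norm_num]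
      rw [Real.rpow_add hx0, Real.rpow_one]
    have hb : (1-x) ^ ((2:ℝ)/3) = (1-x) ^ (-(1:ℝ)/3) * (1-x) := by
      conv_lhs => rw [show ((2:ℝ)/3) = -(1:ℝ)/3 + 1 by norm_num]
      rw [Real.rpow_add h1x, Real.rpow_one]
    rw [e, ha, hb]
    unfold bint
    linear_combination (x ^ (-(1:ℝ)/3) * (1-x) ^ (-(1:ℝ)/3)) * ode ⟨hx0, hx1⟩
  have : HasDerivAt Phi (((2/3) * x ^ ((2:ℝ)/3 - 1) * (1-x) ^ ((2:ℝ)/3)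
        + x ^ ((2:ℝ)/3) * ((-1) * ((2:ℝ)/3) * (1-x) ^ ((2:ℝ)/3 - 1))) * F x
        + x ^ ((2:ℝ)/3) * (1-x) ^ ((2:ℝ)/3) * D x - (2/3) * bint x) x := total
  rwa [hval] at this

lemma F_nonneg {x : ℝ} (hx0 : 0 ≤ x) (hx1 : |x| < 1) : 0 ≤ F x := by
  unfold F
  exact tsum_nonneg (fun n => mul_nonneg (c_pos n).le (pow_nonneg hx0 n))

lemma F_le_two {x : ℝ} (hx0 : 0 ≤ x) (hx1 : x ≤ 1/2) : F x ≤ 2 := by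
  have hx' : |x| < 1 := by rw [abs_of_nonneg hx0]; linarith
  unfold F
  have h1 : ∑' n : ℕ, c n * x ^ n ≤ ∑' n : ℕ, x ^ n := by
    refine Summable.tsum_le_tsum (fun n => ?_) (summable_F hx')
      (summable_geometric_of_lt_one hx0 (by linarith))
    calc c n * x ^ n ≤ 1 * x ^ n :=
          mul_le_mul_of_nonneg_right (c_le_one n) (by positivity)
      _ = x ^ n := by ring
  have h2 : ∑' n : ℕ, x ^ n = (1-x)⁻¹ := tsum_geometric_of_lt_one hx0 (by linarith)
  have h3 : (1-x)⁻¹ ≤ 2 := by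
    rw [inv_le_comm₀ (by linarith) (by norm_num)]
    linarith
  linarith [h1, h2 ▸ h1]

lemma Phi_zero {x : ℝ} (hx : x ∈ Set.Ioo (0:ℝ) 1) : Phi x = 0 := by
  obtain ⟨hx0, hx1⟩ := hx
  -- Phi is constant on (0, x]
  have hconst : ∀ y ∈ Set.Ioc (0:ℝ) x, Phi y = Phi x := by
    intro y hy
    obtain ⟨hy0, hyx⟩ := hy
    have := constant_of_has_deriv_right_zero (f := Phi) (a := y) (b := x)
      (fun z hz => (Phi_hasDerivAt ⟨lt_of_lt_of_le hy0 hz.1,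
        lt_of_le_of_lt hz.2 hx1⟩).continuousAt.continuousWithinAt)
      (fun z hz => (Phi_hasDerivAt ⟨lt_of_lt_of_le hy0 hz.1,
        hz.2.trans hx1⟩).hasDerivWithinAt)
    exact (this x ⟨hyx, le_refl x⟩).symm
  -- limit of Phi at 0+ is 0
  have hlim : Filter.Tendsto Phi (nhdsWithin 0 (Set.Ioi (0:ℝ))) (nhds 0) := by
    have hg : Filter.Tendsto (fun y : ℝ => y ^ ((2:ℝ)/3) * (1-y) ^ ((2:ℝ)/3) * F y)
        (nhdsWithin 0 (Set.Ioi (0:ℝ))) (nhds 0) := by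
      have hupper : Filter.Tendsto (fun y : ℝ => 2 * y ^ ((2:ℝ)/3))
          (nhdsWithin 0 (Set.Ioi (0:ℝ))) (nhds 0) := by
        have h0 : Filter.Tendsto (fun y : ℝ => y ^ ((2:ℝ)/3)) (nhds 0) (nhds 0) := by
          have := (Real.continuousAt_rpow_const 0 ((2:ℝ)/3) (Or.inr (by norm_num))).tendsto
          simpa [Real.zero_rpow (by norm_num : ((2:ℝ)/3) ≠ 0)] using this
        simpa using ((h0.const_mul 2).mono_left nhdsWithin_le_nhds)
      refine tendsto_of_tendsto_of_tendsto_of_le_of_le' tendsto_const_nhds hupper ?_ ?_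
      · filter_upwards [Ioc_mem_nhdsGT (by norm_num : (0:ℝ) < 1/2)] with y hy
        have hy' : |y| < 1 := by rw [abs_of_pos hy.1]; linarith [hy.2]
        have h1y : (0:ℝ) ≤ 1 - y := by linarith [hy.2]
        exact mul_nonneg (mul_nonneg (Real.rpow_nonneg hy.1.le _)
          (Real.rpow_nonneg h1y _)) (F_nonneg hy.1.le hy')
      · filter_upwards [Ioc_mem_nhdsGT (by norm_num : (0:ℝ) < 1/2)] with y hy
        have h1y : (0:ℝ) ≤ 1 - y := by linarith [hy.2]
        have hb1 : (1-y) ^ ((2:ℝ)/3) ≤ 1 :=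
          Real.rpow_le_one h1y (by linarith [hy.1]) (by norm_num)
        have hF2 : F y ≤ 2 := F_le_two hy.1.le hy.2
        have hF0 : 0 ≤ F y := F_nonneg hy.1.le (by rw [abs_of_pos hy.1]; linarith [hy.2])
        have hy23 : (0:ℝ) ≤ y ^ ((2:ℝ)/3) := Real.rpow_nonneg hy.1.le _
        calc y ^ ((2:ℝ)/3) * (1-y) ^ ((2:ℝ)/3) * F y
            ≤ y ^ ((2:ℝ)/3) * 1 * 2 := by
              apply mul_le_mul _ hF2 hF0 (by positivity)
              exact mul_le_mul_of_nonneg_left hb1 hy23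
          _ = 2 * y ^ ((2:ℝ)/3) := by ring
    have hI : Filter.Tendsto I (nhdsWithin 0 (Set.Ioi (0:ℝ))) (nhds 0) := by
      have hint : IntegrableOn bint (Set.uIcc (0:ℝ) 1) volume := by
        rw [Set.uIcc_of_le (by norm_num : (0:ℝ) ≤ 1)]
        exact (intervalIntegrable_iff_integrableOn_Icc_of_le (by norm_num : (0:ℝ) ≤ 1)).1
          bint_int01
      have hIc : ContinuousOn I (Set.uIcc (0:ℝ) 1) :=
        intervalIntegral.continuousOn_primitive_interval hint
      have h0m : (0:ℝ) ∈ Set.uIcc (0:ℝ) 1 := Set.left_mem_uIcc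
      have := (hIc 0 h0m).tendsto
      rw [show I 0 = 0 from intervalIntegral.integral_same] at this
      refine this.mono_left ?_
      rw [Set.uIcc_of_le (by norm_num : (0:ℝ) ≤ 1),
        ← nhdsWithin_Ioc_eq_nhdsGT (zero_lt_one (α := ℝ))]
      exact nhdsWithin_mono 0 Set.Ioc_subset_Icc_self
    have := hg.sub (hI.const_mul ((2:ℝ)/3))
    unfold Phi; simpa using this
  have hconst' : Filter.Tendsto Phi (nhdsWithin 0 (Set.Ioi (0:ℝ))) (nhds (Phi x)) := by
    have hev : ∀ᶠ y in nhdsWithin 0 (Set.Ioi (0:ℝ)), Phi y = Phi x := by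
      filter_upwards [Ioc_mem_nhdsGT hx0] with y hy
      exact hconst y hy
    have hev' : (fun _ : ℝ => Phi x) =ᶠ[nhdsWithin 0 (Set.Ioi (0:ℝ))] Phi := by
      filter_upwards [Ioc_mem_nhdsGT hx0] with y hy
      exact (hconst y hy).symm
    exact Filter.Tendsto.congr' hev' tendsto_const_nhds
  exact tendsto_nhds_unique hconst' hlim


lemma beta_val : (∫ u in (0:ℝ)..1, bint u) = Real.Gamma (2/3) ^ 2 / Real.Gamma (4/3) := by
  have h := Complex.Gamma_mul_Gamma_eq_betaIntegral (s := ((2/3:ℝ):ℂ)) (t := ((2/3:ℝ):ℂ))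
    (by rw [Complex.ofReal_re]; norm_num) (by rw [Complex.ofReal_re]; norm_num)
  have hbeta : Complex.betaIntegral ((2/3:ℝ):ℂ) ((2/3:ℝ):ℂ)
      = ((∫ u in (0:ℝ)..1, bint u : ℝ) : ℂ) := by
    rw [Complex.betaIntegral, ← intervalIntegral.integral_ofReal]
    refine intervalIntegral.integral_congr (fun u hu => ?_)
    rw [Set.uIcc_of_le (by norm_num : (0:ℝ) ≤ 1)] at hu
    obtain ⟨hu0, hu1⟩ := hu
    have e : ((2/3:ℝ):ℂ) - 1 = ((-(1:ℝ)/3 : ℝ):ℂ) := by push_cast; ring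
    rw [e]
    unfold bint
    rw [Complex.ofReal_mul, Complex.ofReal_cpow hu0, Complex.ofReal_cpow (by linarith)]
    push_cast
    ring
  rw [hbeta, ← Complex.ofReal_add] at h
  rw [show (2/3:ℝ) + (2/3:ℝ) = 4/3 by norm_num] at h
  simp only [Complex.Gamma_ofReal] at h
  have h' : Real.Gamma (2/3) * Real.Gamma (2/3)
      = Real.Gamma (4/3) * ∫ u in (0:ℝ)..1, bint u := by exact_mod_cast h
  have hG : Real.Gamma (4/3) ≠ 0 := (Real.Gamma_pos_of_pos (by norm_num)).ne'
  rw [eq_div_iff hG]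
  rw [pow_two]
  linarith [h']

lemma I_add {t : ℝ} (ht : t ∈ Set.Ioo (0:ℝ) 1) :
    I t + I (1-t) = Real.Gamma (2/3) ^ 2 / Real.Gamma (4/3) := by
  obtain ⟨ht0, ht1⟩ := ht
  have h1 : I (1-t) = ∫ u in t..1, bint u := by
    unfold I
    calc (∫ u in (0:ℝ)..(1-t), bint u) = ∫ u in (0:ℝ)..(1-t), bint (1-u) :=
          intervalIntegral.integral_congr (fun u _ => (bint_symm u).symm)
      _ = ∫ u in (1-(1-t))..(1-0), bint u := intervalIntegral.integral_comp_sub_left bint 1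
      _ = ∫ u in t..1, bint u := by norm_num
  rw [h1]
  unfold I
  rw [intervalIntegral.integral_add_adjacent_intervals
    (bint_int ⟨le_refl 0, zero_le_one⟩ ⟨ht0.le, ht1.le⟩)
    (bint_int ⟨ht0.le, ht1.le⟩ ⟨zero_le_one, le_refl 1⟩), beta_val]


lemma F_eq (x : ℝ) : hyp2F1 1 (4/3) (5/3) x = F x := by
  unfold hyp2F1 F
  refine tsum_congr (fun n => ?_)
  congr 1
  rw [poch_one]
  have hf : (n.factorial : ℝ) ≠ 0 := Nat.cast_ne_zero.2 n.factorial_ne_zero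
  have h5 : poch (5/3) n ≠ 0 := (poch_pos (by norm_num) n).ne'
  unfold c
  field_simp


end ConnProof

open ConnProof in
theorem connection_specialization (t : ℝ) (ht : t ∈ Set.Ioo (0 : ℝ) 1) :
    hyp2F1 1 (4/3) (5/3) (1 - t) =
      -hyp2F1 1 (4/3) (5/3) t +
        (2/3) * (Real.Gamma (2/3) ^ 2 / Real.Gamma (4/3)) *
          t ^ (-(2:ℝ)/3) * (1 - t) ^ (-(2:ℝ)/3) := by
  obtain ⟨ht0, ht1⟩ := ht
  have ht1' : (0:ℝ) < 1 - t := by linarith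
  have ht' : (1-t) ∈ Set.Ioo (0:ℝ) 1 := ⟨ht1', by linarith⟩
  have hPt := Phi_zero ⟨ht0, ht1⟩
  have hP1t := Phi_zero ht'
  unfold Phi at hPt hP1t
  rw [sub_sub_cancel] at hP1t
  have hIadd := I_add ⟨ht0, ht1⟩
  set A := t ^ ((2:ℝ)/3) with hA_def
  set B := (1-t) ^ ((2:ℝ)/3) with hB_def
  have hA : 0 < A := Real.rpow_pos_of_pos ht0 _
  have hB : 0 < B := Real.rpow_pos_of_pos ht1' _
  have hsum : A * B * (F t + F (1-t))
      = (2/3) * (Real.Gamma (2/3) ^ 2 / Real.Gamma (4/3)) := by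
    rw [← hIadd]; ring_nf; ring_nf at hPt hP1t; linarith [hPt, hP1t]
  rw [F_eq, F_eq]
  rw [show -(2:ℝ)/3 = -((2:ℝ)/3) by norm_num, Real.rpow_neg ht0.le,
    Real.rpow_neg ht1'.le, ← hA_def, ← hB_def]
  have hG : Real.Gamma (4/3) ≠ 0 := (Real.Gamma_pos_of_pos (by norm_num : (0:ℝ) < 4/3)).ne'
  have hsum2 := hsum
  field_simp [hG] at hsum2
  field_simp
  linear_combination hsum2
end
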